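/- Every graph G satisfies thin(G) ≤ 2^{si(G)}, where thin(G) is the thinness of G. -/
import Mathlib


/-- `(a, b, L)` is a `d`-simultaneous interval representation of `G`:
each vertex `v` gets a nonempty open interval `(a v, b v)` and a label set
`L v ⊆ {1,…,d}`, and distinct vertices are adjacent iff both their intervals
and their label sets intersect. -/
def IsSIRep {V : Type*} (G : SimpleGraph V) (d : ℕ)
    (a b : V → ℝ) (L : V → Finset (Fin d)) : Prop :=
  (∀ v, a v < b v) ∧
  ∀ u v : V, u ≠ v →
    (G.Adj u v ↔ (Set.Ioo (a u) (b u) ∩ Set.Ioo (a v) (b v)).Nonempty ∧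
      (L u ∩ L v).Nonempty)

/-- The simultaneous interval number of `G`. -/
noncomputable def si {V : Type*} (G : SimpleGraph V) : ℕ :=
  sInf {d | ∃ a b L, IsSIRep G d a b L}

/-- The thinness of a finite graph `G`: the least `k` admitting a partition of
the vertices into `k` classes and a vertex ordering such that for any indices
`i < j < l` with the `i`-th and `j`-th vertices in the same class, adjacency of
the `i`-th and `l`-th vertices implies adjacency of the `j`-th and `l`-th. -/
noncomputable def thinness {V : Type*} [Fintype V] (G : SimpleGraph V) : ℕ :=
  sInf {k | ∃ (c : V → Fin k) (σ : Fin (Fintype.card V) ≃ V),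
    ∀ i j l : Fin (Fintype.card V), i < j → j < l → c (σ i) = c (σ j) →
      G.Adj (σ i) (σ l) → G.Adj (σ j) (σ l)}

/-- Every finite graph has a simultaneous interval representation. -/
lemma exists_sirep {V : Type*} [Fintype V] (G : SimpleGraph V) :
    ∃ d a b L, IsSIRep G d a b L := by
  classical
  set d := Fintype.card (Sym2 V) with hd
  let s : Sym2 V ≃ Fin d := Fintype.equivFin (Sym2 V)
  refine ⟨d, fun _ => 0, fun _ => 1,
    fun v => (G.neighborFinset v).image (fun u => s s(u, v)), ?_, ?_⟩
  · intro v; norm_num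
  · intro u v huv
    constructor
    · intro hadj
      refine ⟨⟨(1:ℝ)/2, by norm_num⟩, ⟨s s(u, v), ?_⟩⟩
      rw [Finset.mem_inter, Finset.mem_image, Finset.mem_image]
      exact ⟨⟨v, by simp [hadj], by rw [Sym2.eq_swap]⟩,
        ⟨u, by simp [hadj.symm], rfl⟩⟩
    · rintro ⟨-, x, hx⟩
      rw [Finset.mem_inter, Finset.mem_image, Finset.mem_image] at hx
      obtain ⟨⟨p, hp, hpx⟩, ⟨q, hq, hqx⟩⟩ := hx
      have : s(p, u) = s(q, v) := s.injective (hpx.trans hqx.symm)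
      rw [Sym2.eq_iff] at this
      rcases this with ⟨_, h2⟩ | ⟨h1, h2⟩
      · exact absurd h2 huv
      · subst h1; subst h2
        exact (SimpleGraph.mem_neighborFinset _ _ _).mp hp

/-- A representation with `d` labels gives thinness at most `2 ^ d`. -/
lemma thinness_le_of_sirep {V : Type*} [Fintype V] (G : SimpleGraph V)
    {d : ℕ} {a b : V → ℝ} {L : V → Finset (Fin d)} (h : IsSIRep G d a b L) :
    thinness G ≤ 2 ^ d := by
  classical
  obtain ⟨hab, hiff⟩ := h
  set n := Fintype.card V with hn
  let eV : Fin n ≃ V := (Fintype.equivFin V).symm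
  let f : Fin n → ℝ := fun i => b (eV i)
  let τ : Equiv.Perm (Fin n) := Tuple.sort f
  have hmono : Monotone (f ∘ τ) := Tuple.monotone_sort f
  let σ : Fin n ≃ V := τ.trans eV
  let eL : Finset (Fin d) ≃ Fin (2 ^ d) :=
    Fintype.equivFinOfCardEq (by simp)
  apply Nat.sInf_le
  refine ⟨fun v => eL (L v), σ, ?_⟩
  intro i j l hij hjl hc hadj
  have hLij : L (σ i) = L (σ j) := eL.injective hc
  have hij' : σ i ≠ σ l := fun e => hadj.ne e
  have hjl' : σ j ≠ σ l := fun e => (hjl.ne (σ.injective e))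
  have hbij : b (σ i) ≤ b (σ j) := hmono hij.le
  have hbjl : b (σ j) ≤ b (σ l) := hmono hjl.le
  obtain ⟨⟨x, hx⟩, hlab⟩ := (hiff _ _ hij').mp hadj
  rw [Set.mem_inter_iff, Set.mem_Ioo, Set.mem_Ioo] at hx
  refine (hiff _ _ hjl').mpr ⟨?_, ?_⟩
  · rw [Set.Ioo_inter_Ioo, Set.nonempty_Ioo]
    refine max_lt (lt_min (hab _) ?_) (lt_min ?_ (hab _))
    · exact lt_of_lt_of_le (hab (σ j)) hbjl
    · exact lt_of_lt_of_le hx.2.1 (le_trans hx.1.2.le hbij)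
  · rwa [hLij] at hlab

/-- Every graph satisfies `thin(G) ≤ 2^{si(G)}`. -/
theorem thinness_le_two_pow_si {V : Type*} [Fintype V] (G : SimpleGraph V) :
    thinness G ≤ 2 ^ si G := by
  have hne : {d | ∃ a b L, IsSIRep G d a b L}.Nonempty := by
    obtain ⟨d, a, b, L, h⟩ := exists_sirep G
    exact ⟨d, a, b, L, h⟩
  obtain ⟨a, b, L, h⟩ := Nat.sInf_mem hne
  exact thinness_le_of_sirep G h
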